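/- Let G be a finite simple graph on a nonempty finite vertex set V of size n, with m ≥ 1 edges, and let d̄ = 2m/n. Let ε, α be reals with 0 < ε, ε·m < n, 0 ≤ α < ε, and ε − α ≥ 4/d̄². Suppose G is ε-far from connected, i.e., every connected simple graph on V differs from G in at least ε·m edges, and let D be a set of incidences of G with |D| ≤ 2α·m. Then the number of connected components of G that have at most 4/((ε − α)·d̄) vertices and contain at most one marked incidence is at least (ε − α)·m/2. -/

import Mathlib

open SimpleGraph in
lemma comp_count {V : Type*} [Fintype V] [Nonempty V] (G : SimpleGraph V) (ε : ℝ) (m : ℕ)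
    (hfar : ∀ H : SimpleGraph V, H.Connected →
      ε * m ≤ ((symmDiff G.edgeSet H.edgeSet).ncard : ℝ)) :
    ε * m + 1 ≤ (Nat.card G.ConnectedComponent : ℝ) := by
  classical
  set v₀ : V := Classical.arbitrary V with hv0
  set f : G.ConnectedComponent → V := fun C => (C.exists_rep).choose with hf
  have hfmk : ∀ C, G.connectedComponentMk (f C) = C := fun C => (C.exists_rep).choose_spec
  set Cset : Set G.ConnectedComponent := {C | C ≠ G.connectedComponentMk v₀} with hCset
  set E₀ : Set (Sym2 V) := (fun C => s(v₀, f C)) '' Cset with hE0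
  -- f C ≠ v₀ for C ∈ Cset
  have hfne : ∀ C ∈ Cset, f C ≠ v₀ := by
    intro C hC h
    exact hC (by rw [← hfmk C, h])
  set H : SimpleGraph V := SimpleGraph.fromEdgeSet (G.edgeSet ∪ E₀) with hH
  have hGH : G ≤ H := by
    conv_lhs => rw [← SimpleGraph.fromEdgeSet_edgeSet G]
    exact SimpleGraph.fromEdgeSet_mono Set.subset_union_left
  have hconn : H.Connected := by
    rw [SimpleGraph.connected_iff]
    refine ⟨fun u v => ?_, inferInstance⟩
    have key : ∀ w : V, H.Reachable w v₀ := by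
      intro w
      by_cases hw : G.connectedComponentMk w = G.connectedComponentMk v₀
      · exact (SimpleGraph.ConnectedComponent.exact hw).mono hGH
      · have h1 : G.Reachable w (f (G.connectedComponentMk w)) :=
          SimpleGraph.ConnectedComponent.exact (by rw [hfmk])
        have h2 : H.Adj (f (G.connectedComponentMk w)) v₀ := by
          rw [hH, SimpleGraph.fromEdgeSet_adj]
          constructor
          · right
            rw [hE0]
            exact ⟨G.connectedComponentMk w, hw, by rw [Sym2.eq_swap]⟩
          · exact hfne _ hw
        exact (h1.mono hGH).trans h2.reachable
    exact (key u).trans (key v).symm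
  have hne : ∀ C ∈ Cset, s(v₀, f C) ∉ G.edgeSet := by
    intro C hC h
    exact hC (by rw [← hfmk C]; exact ((SimpleGraph.ConnectedComponent.eq).mpr ((SimpleGraph.mem_edgeSet _).mp h).reachable).symm)
  have hdiag : ∀ e ∈ E₀, ¬ e.IsDiag := by
    rintro e ⟨C, hC, rfl⟩
    simp only [Sym2.isDiag_iff_proj_eq]
    exact fun h => hfne C hC h.symm
  have hsd : symmDiff G.edgeSet H.edgeSet = E₀ := by
    rw [hH, SimpleGraph.edgeSet_fromEdgeSet]
    ext e
    simp only [Set.symmDiff_def, Set.mem_union, Set.mem_diff, Set.mem_setOf_eq]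
    constructor
    · rintro (⟨he, hne2⟩ | ⟨⟨he | he, _⟩, hne2⟩)
      · exact absurd ⟨Or.inl he, G.not_isDiag_of_mem_edgeSet he⟩ hne2
      · exact absurd he hne2
      · exact he
    · intro he
      obtain ⟨C, hC, rfl⟩ := he
      exact Or.inr ⟨⟨Or.inr ⟨C, hC, rfl⟩, hdiag _ ⟨C, hC, rfl⟩⟩, hne C hC⟩
  have hinj : Set.InjOn (fun C => s(v₀, f C)) Cset := by
    intro C hC C' hC' h
    simp only [Sym2.eq_iff] at h
    rcases h with ⟨-, h⟩ | ⟨h1, h2⟩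
    · rw [← hfmk C, h, hfmk C']
    · exact absurd h1.symm (hfne C' hC')
  have hcard : E₀.ncard = Nat.card G.ConnectedComponent - 1 := by
    rw [hE0, Set.ncard_image_of_injOn hinj]
    have : Cset = {G.connectedComponentMk v₀}ᶜ := by ext C; simp [hCset]
    rw [this]
    have h2 := Set.ncard_add_ncard_compl ({G.connectedComponentMk v₀} : Set G.ConnectedComponent)
    rw [Set.ncard_singleton] at h2
    omega
  haveI : Nonempty G.ConnectedComponent := ⟨G.connectedComponentMk v₀⟩
  have hc1 : 1 ≤ Nat.card G.ConnectedComponent := Nat.card_pos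
  have := hfar H hconn
  rw [hsd, hcard] at this
  have : (ε * m : ℝ) ≤ (Nat.card G.ConnectedComponent : ℝ) - 1 := by
    rw [← Nat.cast_pred hc1]
    exact_mod_cast this
  linarith

/-- If an `ε`-far-from-connected graph `G` with `m ≥ 1` edges and average degree
`d̄ = 2m/n` has marked incidences `D` with `|D| ≤ 2α·m`, where `0 ≤ α < ε` and
`ε - α ≥ 4/d̄²`, then the number of connected components with at most
`4/((ε-α)·d̄)` vertices and at most one marked incidence is at least `(ε-α)·m/2`. -/
theorem stmt5 {V : Type*} [Fintype V] [Nonempty V]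
    (G : SimpleGraph V) (ε α : ℝ) (m n : ℕ)
    (hn : n = Fintype.card V) (hm : m = G.edgeSet.ncard) (hm1 : 1 ≤ m)
    (dbar : ℝ) (hdbar : dbar = 2 * m / n)
    (hε : 0 < ε) (hεm : ε * m < n)
    (hα : 0 ≤ α) (hαε : α < ε) (hcase : 4 / dbar ^ 2 ≤ ε - α)
    (hfar : ∀ H : SimpleGraph V, H.Connected →
      ε * m ≤ ((symmDiff G.edgeSet H.edgeSet).ncard : ℝ))
    (D : Finset (V × Sym2 V))
    (hD : ∀ p ∈ D, p.2 ∈ G.edgeSet ∧ p.1 ∈ p.2)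
    (hDcard : (D.card : ℝ) ≤ 2 * α * m) :
    (ε - α) * m / 2 ≤
      (({C : G.ConnectedComponent |
          (C.supp.ncard : ℝ) ≤ 4 / ((ε - α) * dbar) ∧
          ({p : V × Sym2 V | p ∈ D ∧ G.connectedComponentMk p.1 = C}).ncard ≤ 1}).ncard : ℝ) := by
  classical
  haveI : Fintype G.ConnectedComponent := Fintype.ofFinite _
  -- basic positivity
  have hn1 : 1 ≤ n := by rw [hn]; exact Fintype.card_pos
  have hnR : (0:ℝ) < n := by exact_mod_cast hn1
  have hmR : (0:ℝ) < m := by exact_mod_cast hm1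
  have hdpos : 0 < dbar := by rw [hdbar]; positivity
  have hεα : 0 < ε - α := by linarith
  have hnd : (n:ℝ) * dbar = 2 * m := by rw [hdbar]; field_simp
  set s : ℝ := 4 / ((ε - α) * dbar) with hs
  have hspos : 0 < s := by positivity
  -- component count
  have hcount : ε * m + 1 ≤ (Nat.card G.ConnectedComponent : ℝ) := comp_count G ε m hfar
  -- Finset versions
  set Fs : G.ConnectedComponent → Finset V :=
    fun C => Finset.univ.filter (fun v => G.connectedComponentMk v = C) with hFs
  have hsupp : ∀ C : G.ConnectedComponent, C.supp = ↑(Fs C) := by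
    intro C; ext v; simp [hFs, SimpleGraph.ConnectedComponent.mem_supp_iff]
  set FD : G.ConnectedComponent → Finset (V × Sym2 V) :=
    fun C => D.filter (fun p => G.connectedComponentMk p.1 = C) with hFD
  have hDset : ∀ C : G.ConnectedComponent,
      {p : V × Sym2 V | p ∈ D ∧ G.connectedComponentMk p.1 = C} = ↑(FD C) := by
    intro C; ext p; simp [hFD]
  set GoodF : Finset G.ConnectedComponent := Finset.univ.filter
    (fun C => ((Fs C).card : ℝ) ≤ s ∧ (FD C).card ≤ 1) with hGoodF
  set BigF : Finset G.ConnectedComponent := Finset.univ.filter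
    (fun C => ¬ ((Fs C).card : ℝ) ≤ s) with hBigF
  set ManyF : Finset G.ConnectedComponent := Finset.univ.filter
    (fun C => ¬ (FD C).card ≤ 1) with hManyF
  -- goal set equals GoodF
  have hgoal : {C : G.ConnectedComponent |
          (C.supp.ncard : ℝ) ≤ 4 / ((ε - α) * dbar) ∧
          ({p : V × Sym2 V | p ∈ D ∧ G.connectedComponentMk p.1 = C}).ncard ≤ 1} = ↑GoodF := by
    ext C
    simp only [Set.mem_setOf_eq, hGoodF, Finset.coe_filter, Finset.mem_univ, true_and,
      hsupp C, hDset C, Set.ncard_coe_finset, ← hs]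
  rw [hgoal, Set.ncard_coe_finset]
  -- cover
  have hcover : (Finset.univ : Finset G.ConnectedComponent) ⊆ GoodF ∪ BigF ∪ ManyF := by
    intro C _
    simp only [hGoodF, hBigF, hManyF, Finset.mem_union, Finset.mem_filter, Finset.mem_univ,
      true_and]
    tauto
  have hcard1 : (Finset.univ : Finset G.ConnectedComponent).card ≤
      GoodF.card + BigF.card + ManyF.card := by
    calc (Finset.univ : Finset G.ConnectedComponent).card ≤ (GoodF ∪ BigF ∪ ManyF).card :=
          Finset.card_le_card hcover
      _ ≤ (GoodF ∪ BigF).card + ManyF.card := Finset.card_union_le _ _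
      _ ≤ GoodF.card + BigF.card + ManyF.card := by
          exact Nat.add_le_add_right (Finset.card_union_le _ _) _
  have hunivcard : (Finset.univ : Finset G.ConnectedComponent).card
      = Nat.card G.ConnectedComponent := by
    rw [Nat.card_eq_fintype_card, Fintype.card]
  -- Big bound
  have hVsum : (Fintype.card V) = ∑ C : G.ConnectedComponent, (Fs C).card := by
    rw [Fintype.card]
    exact Finset.card_eq_sum_card_fiberwise (fun x _ => Finset.mem_univ _)
  have hBig1 : (BigF.card : ℝ) * s ≤ ∑ C ∈ BigF, ((Fs C).card : ℝ) := by
    rw [← nsmul_eq_mul]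
    refine Finset.card_nsmul_le_sum _ _ _ ?_
    intro C hC
    rw [hBigF, Finset.mem_filter] at hC
    exact le_of_not_ge hC.2
  have hBig2 : ∑ C ∈ BigF, ((Fs C).card : ℝ) ≤ (n : ℝ) := by
    calc ∑ C ∈ BigF, ((Fs C).card : ℝ) ≤ ∑ C : G.ConnectedComponent, ((Fs C).card : ℝ) :=
          Finset.sum_le_sum_of_subset_of_nonneg (Finset.subset_univ _)
            (fun _ _ _ => by positivity)
      _ = (n : ℝ) := by rw [hn]; exact_mod_cast (congrArg Nat.cast hVsum).symm
  have hBig : (BigF.card : ℝ) ≤ (ε - α) * m / 2 := by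
    have h1 : (BigF.card : ℝ) * s ≤ n := le_trans hBig1 hBig2
    rw [hs] at h1
    have h2 : (BigF.card : ℝ) * 4 ≤ n * ((ε - α) * dbar) := by
      rw [mul_div_assoc'] at h1
      have := (div_le_iff₀ (by positivity)).mp h1
      linarith
    nlinarith
  -- Many bound
  have hDsum : D.card = ∑ C : G.ConnectedComponent, (FD C).card :=
    Finset.card_eq_sum_card_fiberwise (fun x _ => Finset.mem_univ _)
  have hMany1 : ManyF.card * 2 ≤ ∑ C ∈ ManyF, (FD C).card := by
    rw [← smul_eq_mul]
    refine Finset.card_nsmul_le_sum _ _ _ ?_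
    intro C hC
    rw [hManyF, Finset.mem_filter] at hC
    omega
  have hMany2 : ∑ C ∈ ManyF, (FD C).card ≤ D.card := by
    rw [hDsum]
    exact Finset.sum_le_sum_of_subset (Finset.subset_univ _)
  have hMany : (ManyF.card : ℝ) ≤ α * m := by
    have : (ManyF.card : ℝ) * 2 ≤ D.card := by exact_mod_cast le_trans hMany1 hMany2
    linarith
  -- conclude
  have hfin : (Nat.card G.ConnectedComponent : ℝ) ≤ GoodF.card + BigF.card + ManyF.card := by
    rw [← hunivcard]; exact_mod_cast hcard1
  linarith
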